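/- Let R be a commutative ring with 1 and define a τ_z b iff ab = 0 on R^#. Then R is a τ_z-atomic-associate-UFR if and only if R is an integral domain or R is isomorphic to a direct product of two fields. -/

import Mathlib

universe u

variable {R : Type u} [CommRing R]

/-- `a ∈ R^#`, i.e. `a` is a nonzero nonunit of `R`. -/
def IsNnu (a : R) : Prop :=
  a ≠ 0 ∧ ¬IsUnit a

/-- `a ∼ b` iff `(a) = (b)`. -/
def RAssoc (a b : R) : Prop :=
  Ideal.span ({a} : Set R) = Ideal.span ({b} : Set R)

/-- `a ≈ b` iff `a = λ * b` for some unit `λ`. -/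
def RSAssoc (a b : R) : Prop :=
  ∃ lam : Rˣ, a = (lam : R) * b

/-- `a ≅ b` iff `a ∼ b` and (`a = b = 0`, or whenever `a = r * b` then `r` is a unit). -/
def RVSAssoc (a b : R) : Prop :=
  RAssoc a b ∧ ((a = 0 ∧ b = 0) ∨ ∀ r : R, a = r * b → IsUnit r)

/-- `a = u * a₁ ⋯ aₙ` (with `l = [a₁, …, aₙ]`) is a `τ`-factorization of `a`:
the list of factors is nonempty, all factors are nonunits, all factors are nonzero
except in the trivial `τ`-factorization `0 = u * 0` of `0`, and the factors are
pairwise related by `τ`. -/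
def IsTauFact (τ : R → R → Prop) (u : Rˣ) (l : List R) (a : R) : Prop :=
  l ≠ [] ∧ (∀ x ∈ l, ¬IsUnit x) ∧ (∀ x ∈ l, x = 0 → l = [0]) ∧
    l.Pairwise τ ∧ a = (u : R) * l.prod

/-- `b` τ-divides `a`, i.e. `b` occurs as a factor in some τ-factorization of `a`. -/
def TauDvd (τ : R → R → Prop) (b a : R) : Prop :=
  ∃ (u : Rˣ) (l : List R), IsTauFact τ u l a ∧ b ∈ l

/-- `a` is τ-irreducible: `a` is a nonunit and every τ-factorization of `a`
has a factor `∼ a`. -/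
def TauIrreducible (τ : R → R → Prop) (a : R) : Prop :=
  ¬IsUnit a ∧ ∀ (u : Rˣ) (l : List R), IsTauFact τ u l a → ∃ x ∈ l, RAssoc a x

/-- `a` is τ-strongly irreducible: `a` is a nonunit and every τ-factorization of `a`
has a factor `≈ a`. -/
def TauSIrreducible (τ : R → R → Prop) (a : R) : Prop :=
  ¬IsUnit a ∧ ∀ (u : Rˣ) (l : List R), IsTauFact τ u l a → ∃ x ∈ l, RSAssoc a x

/-- `a` is τ-m-irreducible: `a` is a nonunit and in every τ-factorization of `a`
every factor is `∼ a`. -/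
def TauMIrreducible (τ : R → R → Prop) (a : R) : Prop :=
  ¬IsUnit a ∧ ∀ (u : Rˣ) (l : List R), IsTauFact τ u l a → ∀ x ∈ l, RAssoc a x

/-- `a` is τ-very strongly irreducible: `a` is a nonunit, `a ≅ a`, and `a` has
no nontrivial τ-factorizations. -/
def TauVSIrreducible (τ : R → R → Prop) (a : R) : Prop :=
  ¬IsUnit a ∧ RVSAssoc a a ∧ ∀ (u : Rˣ) (l : List R), IsTauFact τ u l a → l.length = 1

/-- `R` is τ-atomic: every nonunit has a τ-factorization into τ-irreducible factors. -/
def TauAtomic (τ : R → R → Prop) : Prop :=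
  ∀ a : R, ¬IsUnit a → ∃ (u : Rˣ) (l : List R),
    IsTauFact τ u l a ∧ ∀ x ∈ l, TauIrreducible τ x

/-- `τ` is refinable: replacing each factor of a τ-factorization by the factors of a
τ-factorization of it (absorbing the units into the leading unit) again yields a
τ-factorization. -/
def TauRefinable (τ : R → R → Prop) : Prop :=
  ∀ (a : R) (u : Rˣ) (l : List R), IsTauFact τ u l a →
    ∀ L : List (Rˣ × List R),
      List.Forall₂ (fun x p => IsTauFact τ p.1 p.2 x) l L →
      IsTauFact τ (u * (L.map Prod.fst).prod) (L.map Prod.snd).flatten a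

/-- `τ` is associate preserving. -/
def TauAssocPreserving (τ : R → R → Prop) : Prop :=
  ∀ a b b' : R, IsNnu b' → RAssoc b b' → τ a b → τ a b'

/-- `R` satisfies τ-ACCP: every ascending chain of principal ideals
`(a₀) ⊆ (a₁) ⊆ ⋯` with `a_{i+1} |_τ a_i` stabilizes. -/
def TauACCP (τ : R → R → Prop) : Prop :=
  ∀ f : ℕ → R,
    (∀ i, Ideal.span ({f i} : Set R) ≤ Ideal.span ({f (i + 1)} : Set R)) →
    (∀ i, TauDvd τ (f (i + 1)) (f i)) →
    ∃ N : ℕ, ∀ i, N ≤ i → Ideal.span ({f i} : Set R) = Ideal.span ({f N} : Set R)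

section TauZAux

set_option linter.unusedSectionVars false

lemma rassoc_iff {a b : R} : RAssoc a b ↔ a ∣ b ∧ b ∣ a := by
  constructor
  · intro h
    exact ⟨Ideal.span_singleton_le_span_singleton.mp h.ge,
      Ideal.span_singleton_le_span_singleton.mp h.le⟩
  · rintro ⟨h1, h2⟩
    exact le_antisymm (Ideal.span_singleton_le_span_singleton.mpr h2)
      (Ideal.span_singleton_le_span_singleton.mpr h1)

lemma rassoc_zero {x : R} : RAssoc 0 x ↔ x = 0 := by
  unfold RAssoc
  rw [Set.singleton_zero, Ideal.span_zero, eq_comm, Ideal.span_singleton_eq_bot]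

lemma pairwise_prod_zero {l : List R} (h : l.Pairwise (fun x y : R => x * y = 0))
    (h2 : 2 ≤ l.length) : l.prod = 0 := by
  match l, h with
  | x :: y :: rest, h =>
    have hxy : x * y = 0 := (List.pairwise_cons.mp h).1 y (by simp)
    simp [List.prod_cons, ← mul_assoc, hxy]

lemma fact_of_ne_zero {a : R} (ha : a ≠ 0) {u : Rˣ} {l : List R}
    (h : IsTauFact (fun x y : R => x * y = 0) u l a) :
    ∃ b, l = [b] ∧ RAssoc a b := by
  obtain ⟨hne, hnu, hz, hp, heq⟩ := h
  match l with
  | [] => exact absurd rfl hne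
  | [b] =>
    simp only [List.prod_cons, List.prod_nil, mul_one] at heq
    refine ⟨b, rfl, rassoc_iff.mpr ⟨⟨(↑u⁻¹ : R), ?_⟩, ⟨(u : R), by rw [heq]; ring⟩⟩⟩
    rw [heq, mul_comm (u : R) b, mul_assoc, Units.mul_inv, mul_one]
  | x :: y :: rest =>
    exact absurd (by rw [heq, pairwise_prod_zero hp (by simp), mul_zero]) ha

lemma nnu_irreducible {a : R} (ha : IsNnu a) :
    TauIrreducible (fun x y : R => x * y = 0) a := by
  refine ⟨ha.2, fun u l h => ?_⟩
  obtain ⟨b, hb, hr⟩ := fact_of_ne_zero ha.1 h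
  exact ⟨b, by simp [hb], hr⟩

lemma nnu_of_mul_eq_zero {a b : R} (hab : a * b = 0) (ha : a ≠ 0) (hb : b ≠ 0) :
    IsNnu a ∧ IsNnu b := by
  refine ⟨⟨ha, fun h => hb ?_⟩, ⟨hb, fun h => ha ?_⟩⟩
  · obtain ⟨v, rfl⟩ := h
    calc b = (↑v⁻¹ : R) * (↑v * b) := by rw [← mul_assoc, Units.inv_mul, one_mul]
      _ = 0 := by rw [hab, mul_zero]
  · obtain ⟨v, rfl⟩ := h
    calc a = (↑v⁻¹ : R) * (↑v * a) := by rw [← mul_assoc, Units.inv_mul, one_mul]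
      _ = 0 := by rw [mul_comm (v:R) a, hab, mul_zero]

lemma mk_fact {l : List R} (hne : l ≠ []) (h : ∀ x ∈ l, IsNnu x)
    (hp : l.Pairwise (fun x y : R => x * y = 0)) (hprod : l.prod = 0) :
    IsTauFact (fun x y : R => x * y = 0) 1 l (0 : R) := by
  refine ⟨hne, fun x hx => (h x hx).2, fun x hx hx0 => absurd hx0 (h x hx).1, hp, by
    simp [hprod]⟩

lemma idem_assoc_mul_ne {e x y : R} (he : e * e = e) (hx : RAssoc x e) (hy : RAssoc y e)
    (hy0 : y ≠ 0) (hxy : x * y = 0) : False := by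
  obtain ⟨hxe, hex⟩ := rassoc_iff.mp hx
  obtain ⟨hye, hey⟩ := rassoc_iff.mp hy
  obtain ⟨c, hc⟩ := hxe
  obtain ⟨d, hd⟩ := hey
  apply hy0
  have h1 : e * y = 0 := by rw [hc]; linear_combination c * hxy
  have h2 : e * y = y := by rw [hd, ← mul_assoc, he]
  rw [← h2, h1]

lemma rel_single {α β : Type*} {r : α → β → Prop} {u : α} {v : β}
    (h : Multiset.Rel r {u} {v}) : r u v := by
  rw [← Multiset.cons_zero u, Multiset.rel_cons_left] at h
  obtain ⟨b, t', hub, hrel', ht'⟩ := h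
  obtain ⟨rfl, -⟩ := (Multiset.singleton_eq_cons_iff _).mp ht'
  exact hub

lemma rel_pair_cases {r : R → R → Prop} {x y c d : R}
    (h : Multiset.Rel r (↑[x, y] : Multiset R) (↑[c, d])) :
    (r x c ∧ r y d) ∨ (r x d ∧ r y c) := by
  have h' : Multiset.Rel r (x ::ₘ {y}) (c ::ₘ {d}) := h
  rw [Multiset.rel_cons_right] at h'
  obtain ⟨a, s', hac, hrel, hs⟩ := h'
  have ha : a ∈ (x ::ₘ {y} : Multiset R) := hs ▸ Multiset.mem_cons_self a s'
  rcases Multiset.mem_cons.mp ha with rfl | ha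
  · have hs' : s' = {y} := ((Multiset.cons_inj_right a).mp hs).symm
    exact Or.inl ⟨hac, rel_single (hs' ▸ hrel)⟩
  · have hay : a = y := Multiset.mem_singleton.mp ha
    subst hay
    have hswap : (x ::ₘ {a} : Multiset R) = a ::ₘ {x} := by
      rw [← Multiset.cons_zero a, ← Multiset.cons_zero x]
      exact Multiset.cons_swap x a 0
    rw [hswap] at hs
    have hs' : s' = {x} := ((Multiset.cons_inj_right a).mp hs).symm
    exact Or.inr ⟨rel_single (hs' ▸ hrel), hac⟩

lemma tauAtomic_z [Nontrivial R] : TauAtomic (fun x y : R => x * y = 0) := by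
  intro a ha
  by_cases ha0 : a = 0
  · subst ha0
    by_cases hirr : TauIrreducible (fun x y : R => x * y = 0) (0 : R)
    · refine ⟨1, [0], ⟨by simp, ?_, by simp, by simp, by simp⟩, ?_⟩
      · intro x hx; rw [List.mem_singleton] at hx; subst hx; exact not_isUnit_zero
      · intro x hx; rw [List.mem_singleton] at hx; subst hx; exact hirr
    · rw [TauIrreducible, not_and] at hirr
      have h2 := hirr not_isUnit_zero
      push_neg at h2
      obtain ⟨u, l, hf, hnr⟩ := h2
      refine ⟨u, l, hf, fun x hx => nnu_irreducible ⟨fun h0 => hnr x hx (rassoc_zero.mpr h0),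
        hf.2.1 x hx⟩⟩
  · refine ⟨1, [a], ⟨by simp, ?_, fun x hx hx0 => ?_, by simp, by simp⟩, ?_⟩
    · intro x hx; rw [List.mem_singleton] at hx; subst hx; exact ha
    · rw [List.mem_singleton] at hx; subst hx; exact absurd hx0 ha0
    · intro x hx; rw [List.mem_singleton] at hx; subst hx; exact nnu_irreducible ⟨ha0, ha⟩

lemma pair_fact {x y : R} (hx : IsNnu x) (hy : IsNnu y) (hxy : x * y = 0) :
    IsTauFact (fun a b : R => a * b = 0) 1 [x, y] (0 : R) := by
  refine mk_fact (by simp) ?_ ?_ (by simp [hxy])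
  · intro z hz
    rcases (by simpa using hz : z = x ∨ z = y) with rfl | rfl
    exacts [hx, hy]
  · simp [List.pairwise_cons, hxy]

lemma mem_pair_nnu {x y : R} (hx : IsNnu x) (hy : IsNnu y) :
    ∀ z ∈ [x, y], IsNnu z := by
  intro z hz
  rcases (by simpa using hz : z = x ∨ z = y) with rfl | rfl
  exacts [hx, hy]

lemma rel_symm {r : R → R → Prop} (hs : ∀ {a b : R}, r a b → r b a) {s t : Multiset R}
    (h : Multiset.Rel r s t) : Multiset.Rel r t s :=
  Multiset.rel_flip.mp (h.mono fun a _ b _ hab => hs hab)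

lemma rel_single_intro {r : R → R → Prop} {u v : R} (h : r u v) :
    Multiset.Rel r (↑[u] : Multiset R) (↑[v] : Multiset R) := by
  have h2 : Multiset.Rel r (u ::ₘ 0) (v ::ₘ 0) := Multiset.Rel.cons h Multiset.Rel.zero
  simpa using h2

lemma quot_field_aux [Nontrivial R]
    (key : ∀ l l' : List R,
      IsTauFact (fun x y : R => x * y = 0) 1 l (0 : R) → (∀ x ∈ l, IsNnu x) →
      IsTauFact (fun x y : R => x * y = 0) 1 l' (0 : R) → (∀ x ∈ l', IsNnu x) →
      Multiset.Rel RAssoc (↑l : Multiset R) (↑l' : Multiset R))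
    {e : R} (he : e * e = e) (he0 : e ≠ 0) (he1 : e ≠ 1) :
    IsField (R ⧸ Ideal.span ({1 - e} : Set R)) := by
  have h1e0 : 1 - e ≠ 0 := fun h => he1 (by linear_combination -h)
  have hee1 : e * (1 - e) = 0 := by linear_combination -he
  obtain ⟨hnnE, hnn1E⟩ := nnu_of_mul_eq_zero hee1 he0 h1e0
  have hIne : Ideal.span ({1 - e} : Set R) ≠ ⊤ := by
    intro h
    exact hnn1E.2 (Ideal.span_singleton_eq_top.mp h)
  haveI := Ideal.Quotient.nontrivial_iff.mpr hIne
  refine ⟨exists_pair_ne _, mul_comm, ?_⟩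
  intro x hx
  obtain ⟨x, rfl⟩ := Ideal.Quotient.mk_surjective x
  have hmk1e : Ideal.Quotient.mk (Ideal.span ({1 - e} : Set R)) (1 - e) = 0 :=
    Ideal.Quotient.eq_zero_iff_mem.mpr (Ideal.mem_span_singleton_self _)
  have hmke : Ideal.Quotient.mk (Ideal.span ({1 - e} : Set R)) e = 1 := by
    have h2 : Ideal.Quotient.mk (Ideal.span ({1 - e} : Set R)) (1 - (1 - e)) = 1 - 0 := by
      rw [map_sub, hmk1e, map_one]
    simpa using h2
  have hmky : Ideal.Quotient.mk (Ideal.span ({1 - e} : Set R)) (x * e) =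
      Ideal.Quotient.mk _ x := by rw [map_mul, hmke, mul_one]
  have hy0 : x * e ≠ 0 := by
    rintro h
    apply hx
    rw [← hmky, h, map_zero]
  have hy1e : (x * e) * (1 - e) = 0 := by linear_combination (-x) * he
  obtain ⟨hnnY, -⟩ := nnu_of_mul_eq_zero hy1e hy0 h1e0
  have hrel := key [x * e, 1 - e] [e, 1 - e] (pair_fact hnnY hnn1E hy1e)
    (mem_pair_nnu hnnY hnn1E) (pair_fact hnnE hnn1E hee1) (mem_pair_nnu hnnE hnn1E)
  rcases rel_pair_cases hrel with ⟨hye', -⟩ | ⟨hy1e', -⟩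
  · obtain ⟨hyd, -⟩ := rassoc_iff.mp hye'
    obtain ⟨r, hr⟩ := hyd
    refine ⟨Ideal.Quotient.mk _ r, ?_⟩
    rw [← hmky, ← map_mul, ← hr, hmke]
  · exfalso
    obtain ⟨-, h1ey⟩ := rassoc_iff.mp hy1e'
    apply hx
    rw [← hmky]
    exact Ideal.Quotient.eq_zero_iff_mem.mpr (Ideal.mem_span_singleton.mpr h1ey)

lemma struct_zero [Nontrivial R] {e : R} (he : e * e = e) (he0 : e ≠ 0) (h1e0 : 1 - e ≠ 0)
    (cls : ∀ x : R, IsNnu x → RAssoc x e ∨ RAssoc x (1 - e))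
    {u : Rˣ} {l : List R} (hf : IsTauFact (fun x y : R => x * y = 0) u l 0)
    (hirr : ∀ x ∈ l, TauIrreducible (fun x y : R => x * y = 0) x) :
    Multiset.Rel RAssoc (↑l : Multiset R) (↑[e, 1 - e] : Multiset R) := by
  have he1 : (1 - e) * (1 - e) = 1 - e := by linear_combination he
  have hee1 : e * (1 - e) = 0 := by linear_combination -he
  obtain ⟨hnnE, hnn1E⟩ := nnu_of_mul_eq_zero hee1 he0 h1e0
  have h0ni : ¬TauIrreducible (fun x y : R => x * y = 0) (0 : R) := by
    rintro ⟨-, h⟩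
    obtain ⟨x, hxm, hrx⟩ := h 1 [e, 1 - e] (pair_fact hnnE hnn1E hee1)
    have hx0 : x = 0 := rassoc_zero.mp hrx
    rcases (by simpa using hxm : x = e ∨ x = 1 - e) with rfl | rfl
    exacts [he0 hx0, h1e0 hx0]
  have hne0 : ∀ x ∈ l, x ≠ 0 := by
    intro x hxm hx0
    have hl : l = [0] := hf.2.2.1 x hxm hx0
    exact h0ni (hirr 0 (by rw [hl]; simp))
  have hcls : ∀ x ∈ l, RAssoc x e ∨ RAssoc x (1 - e) :=
    fun x hxm => cls x ⟨hne0 x hxm, hf.2.1 x hxm⟩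
  obtain ⟨hnl, hnu, hz, hp, heq⟩ := hf
  match l, hnl, hne0, hcls, hp, heq with
  | [x], _, hne0, hcls, hp, heq =>
    exfalso
    apply hne0 x (by simp)
    have h4 : (u : R) * x = 0 := by simpa using heq.symm
    calc x = ↑u⁻¹ * ((u : R) * x) := by rw [← mul_assoc, Units.inv_mul, one_mul]
      _ = 0 := by rw [h4, mul_zero]
  | [x, y], _, hne0, hcls, hp, heq =>
    have hxy0 : x * y = 0 := (List.pairwise_cons.mp hp).1 y (by simp)
    have hy0' : y ≠ 0 := hne0 y (by simp)
    have hx0' : x ≠ 0 := hne0 x (by simp)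
    rcases hcls x (by simp) with hx' | hx' <;> rcases hcls y (by simp) with hy' | hy'
    · exact (idem_assoc_mul_ne he hx' hy' hy0' hxy0).elim
    · exact Multiset.Rel.cons hx' (Multiset.Rel.cons hy' Multiset.Rel.zero)
    · have hperm : ([1 - e, e] : List R).Perm [e, 1 - e] := List.Perm.swap _ _ _
      have hco : (↑([1 - e, e] : List R) : Multiset R) = ↑([e, 1 - e] : List R) :=
        Multiset.coe_eq_coe.mpr hperm
      rw [← hco]
      exact Multiset.Rel.cons hx' (Multiset.Rel.cons hy' Multiset.Rel.zero)
    · exact (idem_assoc_mul_ne he1 hx' hy' hy0' hxy0).elim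
  | x :: y :: z :: rest, _, hne0, hcls, hp, heq =>
    exfalso
    obtain ⟨h1, hp2⟩ := List.pairwise_cons.mp hp
    obtain ⟨h2, -⟩ := List.pairwise_cons.mp hp2
    have hxy0 : x * y = 0 := h1 y (by simp)
    have hxz0 : x * z = 0 := h1 z (by simp)
    have hyz0 : y * z = 0 := h2 z (by simp)
    have hy0' : y ≠ 0 := hne0 y (by simp)
    have hz0' : z ≠ 0 := hne0 z (by simp)
    rcases hcls x (by simp) with hx' | hx' <;> rcases hcls y (by simp) with hy' | hy' <;>
      rcases hcls z (by simp) with hz' | hz' <;>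
      first
        | exact idem_assoc_mul_ne he hx' hy' hy0' hxy0
        | exact idem_assoc_mul_ne he hx' hz' hz0' hxz0
        | exact idem_assoc_mul_ne he hy' hz' hz0' hyz0
        | exact idem_assoc_mul_ne he1 hx' hy' hy0' hxy0
        | exact idem_assoc_mul_ne he1 hx' hz' hz0' hxz0
        | exact idem_assoc_mul_ne he1 hy' hz' hz0' hyz0

lemma fact_zero_domain {R : Type u} [CommRing R] [IsDomain R] {u : Rˣ} {l : List R}
    (h : IsTauFact (fun x y : R => x * y = 0) u l 0) : l = [0] := by
  obtain ⟨hnl, hnu, hz, hp, heq⟩ := h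
  have hpr : l.prod = 0 := by
    have h2 : (u : R) * l.prod = 0 := heq.symm
    rcases mul_eq_zero.mp h2 with h3 | h3
    · exact absurd h3 u.ne_zero
    · exact h3
  exact hz 0 (List.prod_eq_zero_iff.mp hpr) rfl

theorem tauZ_UFR_iff' {R : Type u} [CommRing R] [Nontrivial R] :
    (TauAtomic (fun x y : R => x * y = 0) ∧
      ∀ a : R, ¬IsUnit a → ∀ (u u' : Rˣ) (l l' : List R),
        IsTauFact (fun x y : R => x * y = 0) u l a →
        (∀ x ∈ l, TauIrreducible (fun x y : R => x * y = 0) x) →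
        IsTauFact (fun x y : R => x * y = 0) u' l' a →
        (∀ x ∈ l', TauIrreducible (fun x y : R => x * y = 0) x) →
        Multiset.Rel RAssoc (↑l : Multiset R) (↑l' : Multiset R)) ↔
    (IsDomain R ∨ ∃ (K₁ K₂ : Type u) (fld₁ : Field K₁) (fld₂ : Field K₂),
      letI := fld₁
      letI := fld₂
      Nonempty (R ≃+* K₁ × K₂)) := by
  constructor
  · rintro ⟨hat, huniq⟩
    by_cases hdom : IsDomain R
    · exact Or.inl hdom
    right
    have key : ∀ l l' : List R,
        IsTauFact (fun x y : R => x * y = 0) 1 l (0 : R) → (∀ x ∈ l, IsNnu x) →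
        IsTauFact (fun x y : R => x * y = 0) 1 l' (0 : R) → (∀ x ∈ l', IsNnu x) →
        Multiset.Rel RAssoc (↑l : Multiset R) (↑l' : Multiset R) := by
      intro l l' h1 h2 h3 h4
      exact huniq 0 not_isUnit_zero 1 1 l l' h1 (fun x hx => nnu_irreducible (h2 x hx)) h3
        (fun x hx => nnu_irreducible (h4 x hx))
    have hzd : ∃ a b : R, a * b = 0 ∧ a ≠ 0 ∧ b ≠ 0 := by
      by_contra hc
      push_neg at hc
      haveI : NoZeroDivisors R := ⟨fun {a b} h => by
        by_cases ha : a = 0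
        · exact Or.inl ha
        · exact Or.inr (hc a b h ha)⟩
      exact hdom (NoZeroDivisors.to_isDomain R)
    obtain ⟨a, b, hab, ha0, hb0⟩ := hzd
    obtain ⟨hna, hnb⟩ := nnu_of_mul_eq_zero hab ha0 hb0
    have hsq : ∀ c : R, IsNnu c → c * c = 0 → False := by
      intro c hc hcc
      have hmem3 : ∀ z ∈ [c, c, c], IsNnu z := by
        intro z hz
        have hzc : z = c := by simpa using hz
        rw [hzc]; exact hc
      have h2 := key [c, c] [c, c, c]
        (mk_fact (by simp) (mem_pair_nnu hc hc) (by simp [hcc]) (by simp [hcc]))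
        (mem_pair_nnu hc hc)
        (mk_fact (by simp) hmem3 (by simp [hcc]) (by simp [hcc]))
        hmem3
      have hcard := Multiset.card_eq_card_of_rel h2
      simp at hcard
    have ha2 : a * a ≠ 0 := fun h => hsq a hna h
    have hb2 : b * b ≠ 0 := fun h => hsq b hnb h
    have hna2 : IsNnu (a * a) := ⟨ha2, fun h => hna.2 (isUnit_of_mul_isUnit_left h)⟩
    have hab2 : (a * a) * b = 0 := by linear_combination a * hab
    have hrel := key [a * a, b] [a, b] (pair_fact hna2 hnb hab2) (mem_pair_nnu hna2 hnb)
      (pair_fact hna hnb hab) (mem_pair_nnu hna hnb)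
    rcases rel_pair_cases hrel with ⟨haa, -⟩ | ⟨hab', -⟩
    swap
    · exfalso
      obtain ⟨haab, -⟩ := rassoc_iff.mp hab'
      obtain ⟨r, hr⟩ := haab
      exact hb2 (by linear_combination b * hr + (a * r) * hab)
    obtain ⟨haaa, -⟩ := rassoc_iff.mp haa
    obtain ⟨s, hs⟩ := haaa
    have he : (a * s) * (a * s) = a * s := by linear_combination (-s) * hs
    have he0 : a * s ≠ 0 := by
      intro h
      exact ha0 (by linear_combination hs + a * h)
    have he1 : a * s ≠ 1 := fun h => hna.2 (IsUnit.of_mul_eq_one s h)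
    have hf1 := quot_field_aux key he he0 he1
    have he' : (1 - a * s) * (1 - a * s) = 1 - a * s := by linear_combination he
    have he'0 : 1 - a * s ≠ 0 := fun h => he1 (by linear_combination -h)
    have he'1 : 1 - a * s ≠ 1 := fun h => he0 (by linear_combination -h)
    have hf2 := quot_field_aux key he' he'0 he'1
    rw [sub_sub_cancel] at hf2
    have hco : IsCoprime (Ideal.span ({1 - a * s} : Set R)) (Ideal.span ({a * s} : Set R)) := by
      rw [Ideal.isCoprime_iff_exists]
      exact ⟨1 - a * s, Ideal.mem_span_singleton_self _, a * s,
        Ideal.mem_span_singleton_self _, by ring⟩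
    have hinf : Ideal.span ({1 - a * s} : Set R) ⊓ Ideal.span ({a * s} : Set R) = ⊥ := by
      apply le_antisymm _ bot_le
      rintro x hx
      obtain ⟨hx1, hx2⟩ := Submodule.mem_inf.mp hx
      rw [Ideal.mem_span_singleton] at hx1 hx2
      obtain ⟨p, hp⟩ := hx1
      obtain ⟨q, hq⟩ := hx2
      have hx0 : x = 0 := by
        linear_combination (a * s) * hp + (1 - a * s) * hq - (p + q) * he
      simp [hx0]
    refine ⟨R ⧸ Ideal.span ({1 - a * s} : Set R), R ⧸ Ideal.span ({a * s} : Set R),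
      hf1.toField, hf2.toField, ⟨?_⟩⟩
    exact ((RingEquiv.quotientBot R).symm.trans (Ideal.quotEquivOfEq hinf.symm)).trans
      (Ideal.quotientInfEquivQuotientProd _ _ hco)
  · rintro (hdom | ⟨K₁, K₂, fld₁, fld₂, ⟨f⟩⟩)
    · refine ⟨tauAtomic_z, ?_⟩
      intro a ha u u' l l' hfv hirr hfv' hirr'
      by_cases ha0 : a = 0
      · subst ha0
        have hl : l = [0] := fact_zero_domain hfv
        have hl' : l' = [0] := fact_zero_domain hfv'
        subst hl; subst hl'
        exact rel_single_intro (show RAssoc (0 : R) 0 from rfl)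
      · obtain ⟨b, rfl, hrb⟩ := fact_of_ne_zero ha0 hfv
        obtain ⟨b', rfl, hrb'⟩ := fact_of_ne_zero ha0 hfv'
        exact rel_single_intro (hrb.symm.trans hrb')
    · set e : R := f.symm (1, 0) with hedef
      have hfe : f e = (1, 0) := f.apply_symm_apply _
      have hf1e : f (1 - e) = (0, 1) := by
        rw [map_sub, map_one, hfe]
        ext <;> simp
      have he : e * e = e := by
        apply f.injective
        rw [map_mul, hfe]
        ext <;> simp
      have he0 : e ≠ 0 := by
        intro h
        rw [h, map_zero] at hfe
        exact one_ne_zero (congrArg Prod.fst hfe).symm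
      have h1e0 : 1 - e ≠ 0 := by
        intro h
        rw [h, map_zero] at hf1e
        exact one_ne_zero (congrArg Prod.snd hf1e).symm
      have hdvd : ∀ x y : R, f x ∣ f y → x ∣ y := by
        rintro x y ⟨c, hc⟩
        refine ⟨f.symm c, ?_⟩
        have h5 : f.symm (f y) = f.symm (f x * c) := congrArg f.symm hc
        simpa [map_mul] using h5
      have cls : ∀ x : R, IsNnu x → RAssoc x e ∨ RAssoc x (1 - e) := by
        rintro x ⟨hx0, hxu⟩
        have hfx0 : f x ≠ 0 := fun h => hx0 (by simpa using congrArg f.symm h)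
        have hfxu : ¬IsUnit (f x) := fun h => hxu (by simpa using h.map f.symm)
        have hcases : ((f x).1 ≠ 0 ∧ (f x).2 = 0) ∨ ((f x).1 = 0 ∧ (f x).2 ≠ 0) := by
          have h1 : ¬((f x).1 ≠ 0 ∧ (f x).2 ≠ 0) := by
            rintro ⟨h1, h2⟩
            refine hfxu (isUnit_iff_exists_inv.mpr ⟨((f x).1⁻¹, (f x).2⁻¹), ?_⟩)
            ext
            · simp [mul_inv_cancel₀ h1]
            · simp [mul_inv_cancel₀ h2]
          have h2 : (f x).1 ≠ 0 ∨ (f x).2 ≠ 0 := by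
            by_contra hcc
            push_neg at hcc
            exact hfx0 (Prod.ext hcc.1 hcc.2)
          tauto
        rcases hcases with ⟨hp, hq⟩ | ⟨hp, hq⟩
        · left
          refine rassoc_iff.mpr ⟨hdvd _ _ ?_, hdvd _ _ ?_⟩
          · rw [hfe]
            refine ⟨((f x).1⁻¹, 0), ?_⟩
            ext
            · simp [mul_inv_cancel₀ hp]
            · simp
          · rw [hfe]
            refine ⟨f x, ?_⟩
            ext
            · simp
            · simp [hq]
        · right
          refine rassoc_iff.mpr ⟨hdvd _ _ ?_, hdvd _ _ ?_⟩
          · rw [hf1e]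
            refine ⟨(0, (f x).2⁻¹), ?_⟩
            ext
            · simp
            · simp [mul_inv_cancel₀ hq]
          · rw [hf1e]
            refine ⟨f x, ?_⟩
            ext
            · simp [hp]
            · simp
      refine ⟨tauAtomic_z, ?_⟩
      intro a ha u u' l l' hfv hirr hfv' hirr'
      by_cases ha0 : a = 0
      · subst ha0
        haveI : IsTrans R RAssoc := ⟨fun a b c h1 h2 => h1.trans h2⟩
        have s1 := struct_zero he he0 h1e0 cls hfv hirr
        have s2 := struct_zero he he0 h1e0 cls hfv' hirr'
        exact Multiset.Rel.trans _ s1 (rel_symm (fun {a b} h => h.symm) s2)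
      · obtain ⟨b, rfl, hrb⟩ := fact_of_ne_zero ha0 hfv
        obtain ⟨b', rfl, hrb'⟩ := fact_of_ne_zero ha0 hfv'
        exact rel_single_intro (hrb.symm.trans hrb')


end TauZAux

/-- For the relation `a τ_z b ↔ a * b = 0`: `R` is a τ_z-atomic-associate-UFR if and
only if `R` is an integral domain or `R` is isomorphic to a direct product of two
fields. -/
theorem tauZ_UFR_iff {R : Type u} [CommRing R] [Nontrivial R] :
    (TauAtomic (fun x y : R => x * y = 0) ∧
      ∀ a : R, ¬IsUnit a → ∀ (u u' : Rˣ) (l l' : List R),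
        IsTauFact (fun x y : R => x * y = 0) u l a →
        (∀ x ∈ l, TauIrreducible (fun x y : R => x * y = 0) x) →
        IsTauFact (fun x y : R => x * y = 0) u' l' a →
        (∀ x ∈ l', TauIrreducible (fun x y : R => x * y = 0) x) →
        Multiset.Rel RAssoc (↑l : Multiset R) (↑l' : Multiset R)) ↔
    (IsDomain R ∨ ∃ (K₁ K₂ : Type u) (fld₁ : Field K₁) (fld₂ : Field K₂),
      letI := fld₁
      letI := fld₂
      Nonempty (R ≃+* K₁ × K₂)) := tauZ_UFR_iff'
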